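/- arXiv:1308.4945 — 7 statements merged into one kernel-verified Lean document; each statement's English description precedes it below -/
import Mathlib

section
/- For every n ≥ 1, the cardinality of B(n) equals the n-th Fibonacci number F_n, where F_1 = F_2 = 1 and F_n = F_{n-1} + F_{n-2} for n ≥ 3. -/
/-- `BSet n l` says that the integer vector `l` belongs to the recursively defined
family `B(n)`: `B(1) = {(1)}`, `B(2) = {(1,1)}`, and for `n ≥ 3`,
`B(n) = C(n) ∪ D(n)` where `C(n)` appends a final `1` to a vector of `B(n-1)` and
`D(n)` increments the last entry of a vector `(1, t₁, …, t_s)` of `B(n-1)`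
provided `t_{s-1} > 1` or `s = 1`. -/
inductive BSet : ℕ → List ℕ → Prop
  | base1 : BSet 1 [1]
  | base2 : BSet 2 [1, 1]
  | extC {n : ℕ} {l : List ℕ} : 2 ≤ n → BSet n l → BSet (n + 1) (l ++ [1])
  | extD {n : ℕ} {l : List ℕ} {t : ℕ} : 2 ≤ n → BSet n (l ++ [t]) →
      (l.length = 1 ∨ 1 < l.getLastD 0) → BSet (n + 1) (l ++ [t + 1])

/-- Finset of lists of naturals with all entries ≥ 2 and sum `s`. -/
def GF : ℕ → Finset (List ℕ)
  | 0 => {[]}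
  | (s+1) => (Finset.Icc 2 (s+1)).attach.biUnion
      (fun a => (GF (s+1-a.1)).image (a.1 :: ·))
decreasing_by
  have h := (Finset.mem_Icc.mp a.2).1
  omega

lemma mem_GF : ∀ (s : ℕ) (L : List ℕ), L ∈ GF s ↔ (L.sum = s ∧ ∀ x ∈ L, 2 ≤ x) := by
  intro s
  induction s using Nat.strong_induction_on with
  | _ s ih =>
    intro L
    match s with
    | 0 =>
      simp only [GF, Finset.mem_singleton]
      constructor
      · rintro rfl; simp
      · rintro ⟨h1, h2⟩
        cases L with
        | nil => rfl
        | cons a t =>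
          have := h2 a (by simp)
          simp only [List.sum_cons] at h1
          omega
    | (s+1) =>
      rw [GF]
      simp only [Finset.mem_biUnion, Finset.mem_attach, true_and, Finset.mem_image,
        Subtype.exists]
      constructor
      · rintro ⟨a, ha, L', hL', rfl⟩
        have ha' := Finset.mem_Icc.mp ha
        have h := (ih (s+1-a) (by omega) L').mp hL'
        constructor
        · simp only [List.sum_cons, h.1]; omega
        · intro x hx
          rcases List.mem_cons.mp hx with rfl | hx
          · exact ha'.1
          · exact h.2 x hx
      · rintro ⟨h1, h2⟩
        cases L with
        | nil => simp at h1
        | cons a L' =>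
          have ha : 2 ≤ a := h2 a (by simp)
          simp only [List.sum_cons] at h1
          refine ⟨a, Finset.mem_Icc.mpr ⟨ha, by omega⟩, L', ?_, rfl⟩
          exact (ih (s+1-a) (by omega) L').mpr ⟨by omega, fun x hx => h2 x (by simp [hx])⟩

lemma GF_zero_card : (GF 0).card = 1 := by simp [GF]

lemma GF_card_succ (s : ℕ) : (GF (s+1)).card = ∑ t ∈ Finset.range s, (GF t).card := by
  rw [GF, Finset.card_biUnion]
  · rw [Finset.sum_attach (Finset.Icc 2 (s+1)) (fun a => ((GF (s+1-a)).image (a :: ·)).card)]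
    have himg : ∀ a ∈ Finset.Icc 2 (s+1),
        ((GF (s+1-a)).image (a :: ·)).card = (GF (s+1-a)).card := by
      intro a _
      exact Finset.card_image_of_injective _ (fun x y h => by simpa using h)
    rw [Finset.sum_congr rfl himg]
    refine Finset.sum_nbij' (fun a => s+1-a) (fun t => s+1-t) ?_ ?_ ?_ ?_ ?_
    · intro a ha
      have := Finset.mem_Icc.mp ha
      show s+1-a ∈ Finset.range s
      exact Finset.mem_range.mpr (by omega)
    · intro t ht
      have := Finset.mem_range.mp ht
      show s+1-t ∈ Finset.Icc 2 (s+1)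
      exact Finset.mem_Icc.mpr ⟨by omega, by omega⟩
    · intro a ha; have := Finset.mem_Icc.mp ha
      show s+1-(s+1-a) = a
      omega
    · intro t ht; have := Finset.mem_range.mp ht
      show s+1-(s+1-t) = t
      omega
    · intro a ha; rfl
  · intro x _ y _ hxy
    rw [Function.onFun, Finset.disjoint_left]
    rintro v hv hv'
    obtain ⟨L, _, rfl⟩ := Finset.mem_image.mp hv
    obtain ⟨L', _, h⟩ := Finset.mem_image.mp hv'
    exact hxy (Subtype.ext (by injection h.symm))

lemma GF_fib : ∀ s : ℕ, (GF (s+1)).card = Nat.fib s ∧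
    ∑ t ∈ Finset.range (s+1), (GF t).card = Nat.fib (s+1) := by
  intro s
  induction s with
  | zero =>
    constructor
    · rw [GF_card_succ]; simp
    · simp [GF_zero_card]
  | succ s ih =>
    constructor
    · rw [GF_card_succ]; exact ih.2
    · rw [Finset.sum_range_succ, ih.2, ih.1, Nat.fib_add_two, Nat.add_comm]

/-- Finset realization of `B(n)`. -/
def FB (n : ℕ) : Finset (List ℕ) :=
  (Finset.range n).biUnion
    (fun m => (GF (n - 1 - m)).image (fun L => 1 :: (L ++ List.replicate m 1)))

lemma mem_FB {n : ℕ} {v : List ℕ} : v ∈ FB n ↔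
    ∃ L m, (∀ x ∈ L, 2 ≤ x) ∧ 1 + L.sum + m = n ∧ v = 1 :: (L ++ List.replicate m 1) := by
  simp only [FB, Finset.mem_biUnion, Finset.mem_range, Finset.mem_image]
  constructor
  · rintro ⟨m, hm, L, hL, rfl⟩
    have h := (mem_GF _ L).mp hL
    exact ⟨L, m, h.2, by omega, rfl⟩
  · rintro ⟨L, m, h1, h2, rfl⟩
    exact ⟨m, by omega, L, (mem_GF _ L).mpr ⟨by omega, h1⟩, rfl⟩

lemma rep_unique : ∀ (L L' : List ℕ) (m m' : ℕ), (∀ x ∈ L, 2 ≤ x) → (∀ x ∈ L', 2 ≤ x) →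
    L ++ List.replicate m 1 = L' ++ List.replicate m' 1 → L = L' ∧ m = m' := by
  intro L
  induction L with
  | nil =>
    intro L' m m' _ h2 h
    simp only [List.nil_append] at h
    have hL' : L' = [] := by
      cases L' with
      | nil => rfl
      | cons b t =>
        have hb : b ∈ List.replicate m 1 := by rw [h]; simp
        have := List.eq_of_mem_replicate hb
        have := h2 b (by simp)
        omega
    subst hL'
    simp only [List.nil_append] at h
    constructor
    · rfl
    · have := congrArg List.length h
      simpa using this
  | cons a L ih =>
    intro L' m m' h1 h2 h
    cases L' with
    | nil =>
      have ha : a ∈ List.replicate m' 1 := by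
        rw [List.nil_append] at h
        rw [← h]; simp
      have := List.eq_of_mem_replicate ha
      have := h1 a (by simp)
      omega
    | cons b t =>
      simp only [List.cons_append, List.cons.injEq] at h
      obtain ⟨rfl, h⟩ := h
      obtain ⟨rfl, rfl⟩ := ih t m m' (fun x hx => h1 x (by simp [hx]))
        (fun x hx => h2 x (by simp [hx])) h
      exact ⟨rfl, rfl⟩

lemma card_FB (n : ℕ) : (FB (n+1)).card = Nat.fib (n+1) := by
  rw [FB, Finset.card_biUnion]
  · have himg : ∀ m ∈ Finset.range (n+1),
        ((GF (n+1-1-m)).image (fun L => 1 :: (L ++ List.replicate m 1))).card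
          = (GF (n+1-1-m)).card := by
      intro m _
      refine Finset.card_image_of_injective _ (fun x y h => ?_)
      simp only [List.cons.injEq, true_and] at h
      exact List.append_cancel_right h
    rw [Finset.sum_congr rfl himg,
      Finset.sum_range_reflect (fun t => (GF t).card) (n+1)]
    exact (GF_fib n).2
  · intro x _ y _ hxy
    rw [Function.onFun, Finset.disjoint_left]
    rintro v hv hv'
    obtain ⟨L, hL, rfl⟩ := Finset.mem_image.mp hv
    obtain ⟨L', hL', h⟩ := Finset.mem_image.mp hv'
    simp only [List.cons.injEq, true_and] at h
    have e1 := (mem_GF _ L).mp hL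
    have e2 := (mem_GF _ L').mp hL'
    exact hxy (rep_unique L' L y x e2.2 e1.2 h).2.symm

lemma BSet_mem {n : ℕ} {v : List ℕ} (h : BSet n v) : v ∈ FB n := by
  induction h with
  | base1 =>
    rw [mem_FB]; exact ⟨[], 0, by simp, by simp, by simp⟩
  | base2 =>
    rw [mem_FB]; exact ⟨[], 1, by simp, by simp, by simp [List.replicate]⟩
  | extC hn hB ih =>
    rw [mem_FB] at ih ⊢
    obtain ⟨L, m, h1, h2, rfl⟩ := ih
    refine ⟨L, m+1, h1, by omega, ?_⟩
    simp [List.replicate_succ']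
  | @extD k l t hn hB hcond ih =>
    rw [mem_FB] at ih ⊢
    obtain ⟨L, m, h1, h2, heq⟩ := ih
    cases m with
    | zero =>
      simp only [List.replicate_zero, List.append_nil] at heq h2
      by_cases hL : L = []
      · subst hL
        have hl : l = [] ∧ t = 1 := by
          have := List.concat_inj.mp
            (by simpa [List.concat_eq_append] using heq : l.concat t = List.concat [] 1)
          simpa using this
        obtain ⟨rfl, rfl⟩ := hl
        rcases hcond with hc | hc
        · simp at hc
        · simp at hc
      · have hsplit := List.dropLast_append_getLast hL
        set a := L.getLast hL with ha
        have heq2 : l.concat t = (1 :: L.dropLast).concat a := by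
          rw [List.concat_eq_append, List.concat_eq_append, heq, List.cons_append, hsplit]
        obtain ⟨rfl, rfl⟩ := List.concat_inj.mp heq2
        have ha2 : 2 ≤ a := h1 a (ha ▸ List.getLast_mem hL)
        have hsum : L.dropLast.sum + a = L.sum := by
          conv_rhs => rw [← hsplit]
          simp
        refine ⟨L.dropLast ++ [a+1], 0, ?_, ?_, ?_⟩
        · intro x hx
          rcases List.mem_append.mp hx with hx | hx
          · exact h1 x (List.dropLast_subset L hx)
          · simp only [List.mem_singleton] at hx; omega
        · simp only [List.sum_append, List.sum_cons, List.sum_nil]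
          omega
        · simp [List.cons_append, List.append_assoc]
    | succ m' =>
      rw [List.replicate_succ'] at heq
      have heq2 : l.concat t = (1 :: (L ++ List.replicate m' 1)).concat 1 := by
        simp only [List.concat_eq_append, List.cons_append, List.append_assoc]
        exact heq
      obtain ⟨rfl, rfl⟩ := List.concat_inj.mp heq2
      have hm' : m' = 0 := by
        cases m' with
        | zero => rfl
        | succ k =>
          exfalso
          rcases hcond with hc | hc
          · simp at hc
          · rw [List.replicate_succ'] at hc
            have : (1 :: (L ++ (List.replicate k 1 ++ [1]))).getLastD 0 = 1 := by
              have : (1 :: (L ++ (List.replicate k 1 ++ [1])))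
                  = (1 :: (L ++ List.replicate k 1)) ++ [1] := by
                simp [List.cons_append, List.append_assoc]
              rw [this, List.getLastD_concat]
            omega
      subst hm'
      simp only [List.replicate_zero, List.append_nil] at h2 ⊢
      refine ⟨L ++ [2], 0, ?_, ?_, ?_⟩
      · intro x hx
        rcases List.mem_append.mp hx with hx | hx
        · exact h1 x hx
        · simp only [List.mem_singleton] at hx; omega
      · simp only [List.sum_append, List.sum_cons, List.sum_nil]
        omega
      · simp [List.cons_append, List.append_assoc]

lemma mem_BSet : ∀ (n : ℕ) (v : List ℕ), v ∈ FB (n+1) → BSet (n+1) v := by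
  intro n
  induction n using Nat.strong_induction_on with
  | _ n ih =>
    intro v hv
    rw [mem_FB] at hv
    obtain ⟨L, m, h1, h2, rfl⟩ := hv
    have hLnil : L.sum = 0 → L = [] := by
      intro hs
      cases L with
      | nil => rfl
      | cons a t =>
        have := h1 a (by simp)
        simp only [List.sum_cons] at hs
        omega
    match n with
    | 0 =>
      have hm : m = 0 := by omega
      have hL : L = [] := hLnil (by omega)
      subst hm; subst hL
      simpa using BSet.base1
    | 1 =>
      have hL : L = [] := by
        cases L with
        | nil => rfl
        | cons a t =>
          have := h1 a (by simp)
          simp only [List.sum_cons] at h2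
          omega
      subst hL
      have hm : m = 1 := by simp at h2; omega
      subst hm
      simpa [List.replicate] using BSet.base2
    | (k+2) =>
      cases m with
      | succ m' =>
        have hprev : BSet (k+2) (1 :: (L ++ List.replicate m' 1)) := by
          apply ih (k+1) (by omega)
          rw [mem_FB]
          exact ⟨L, m', h1, by omega, rfl⟩
        have := BSet.extC (by omega : 2 ≤ k+2) hprev
        have heq : (1 :: (L ++ List.replicate m' 1)) ++ [1]
            = 1 :: (L ++ List.replicate (m'+1) 1) := by
          simp [List.replicate_succ', List.append_assoc]
        rwa [heq] at this
      | zero =>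
        simp only [List.replicate_zero, List.append_nil] at h2 ⊢
        have hL : L ≠ [] := by
          intro hnil; subst hnil; simp at h2
        have hsplit := List.dropLast_append_getLast hL
        set a := L.getLast hL with ha
        have ha2 : 2 ≤ a := h1 a (ha ▸ List.getLast_mem hL)
        have hsum : L.dropLast.sum + a = L.sum := by
          conv_rhs => rw [← hsplit]
          simp
        have hd1 : ∀ x ∈ L.dropLast, 2 ≤ x := fun x hx => h1 x (List.dropLast_subset L hx)
        have hprev : BSet (k+2) ((1 :: L.dropLast) ++ [a-1]) := by
          apply ih (k+1) (by omega)
          rw [mem_FB]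
          by_cases ha3 : a = 2
          · refine ⟨L.dropLast, 1, hd1, by omega, ?_⟩
            have : a - 1 = 1 := by omega
            simp [this, List.replicate, List.cons_append]
          · refine ⟨L.dropLast ++ [a-1], 0, ?_, ?_, ?_⟩
            · intro x hx
              rcases List.mem_append.mp hx with hx | hx
              · exact hd1 x hx
              · simp only [List.mem_singleton] at hx; omega
            · simp only [List.sum_append, List.sum_cons, List.sum_nil]; omega
            · simp [List.cons_append]
        have hcond : (1 :: L.dropLast).length = 1 ∨ 1 < (1 :: L.dropLast).getLastD 0 := by
          by_cases hd : L.dropLast = []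
          · left; simp [hd]
          · right
            have hsplit2 := List.dropLast_append_getLast hd
            have hb2 : 2 ≤ L.dropLast.getLast hd :=
              hd1 _ (List.getLast_mem hd)
            have : (1 :: L.dropLast)
                = (1 :: L.dropLast.dropLast) ++ [L.dropLast.getLast hd] := by
              rw [List.cons_append, hsplit2]
            rw [this, List.getLastD_concat]
            omega
        have hfin := BSet.extD (by omega : 2 ≤ k+2) hprev hcond
        have heq : (1 :: L.dropLast) ++ [a-1+1] = 1 :: L := by
          have : a - 1 + 1 = a := by omega
          rw [this, List.cons_append, hsplit]
        rwa [heq] at hfin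

/-- The cardinality of `B(n)` is the `n`-th Fibonacci number. -/
theorem card_BSet_eq_fib :
    ∀ n : ℕ, 1 ≤ n →
      {l : List ℕ | BSet n l}.Finite ∧ {l : List ℕ | BSet n l}.ncard = Nat.fib n := by
  intro n hn
  obtain ⟨k, rfl⟩ : ∃ k, n = k + 1 := ⟨n - 1, by omega⟩
  have hset : {l : List ℕ | BSet (k+1) l} = ↑(FB (k+1)) := by
    ext v
    simp only [Set.mem_setOf_eq, Finset.coe_insert, Finset.mem_coe]
    exact ⟨fun h => BSet_mem h, fun h => mem_BSet k v h⟩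
  rw [hset]
  exact ⟨(FB (k+1)).finite_toSet, by rw [Set.ncard_coe_finset, card_FB]⟩
end

section
/- For every n ≥ 4, |D(n)| = |B(n-1)| − |B(n-3)|; equivalently, the number of vectors in B(n-1) whose last two entries both equal 1 is |B(n-3)|, and D(n) is in bijection with the set of vectors in B(n-1) whose second-to-last entry is greater than 1 (or which have length 2). -/
lemma bset_pos {n : ℕ} {l : List ℕ} (h : BSet n l) : ∀ x ∈ l, 1 ≤ x := by
  induction h with
  | base1 => simp
  | base2 => simp
  | extC _ _ ih => intro x hx; rcases List.mem_append.1 hx with h|h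
                   · exact ih x h
                   · simp at h; omega
  | extD _ _ _ ih => intro x hx; rcases List.mem_append.1 hx with h|h
                     · exact ih x (by simp [h])
                     · simp at h; omega

lemma bset_sum {n : ℕ} {l : List ℕ} (h : BSet n l) : l.sum = n := by
  induction h with
  | base1 => simp
  | base2 => simp
  | extC _ _ ih => simp [ih]
  | extD _ _ _ ih => simp at ih ⊢; omega

lemma bset_len {n : ℕ} {l : List ℕ} (h : BSet n l) (hn : 2 ≤ n) : 2 ≤ l.length := by
  induction h with
  | base1 => omega
  | base2 => simp
  | extC h2 _ ih => have := ih h2; simp; omega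
  | extD h2 _ _ ih => have := ih h2; simp at this ⊢; omega

lemma bset_one {l : List ℕ} (h : BSet 1 l) : l = [1] := by
  cases h with
  | base1 => rfl
  | extC h2 _ => omega
  | extD h2 _ _ => omega

lemma bset_extC {n : ℕ} {l : List ℕ} (h : BSet n l) : BSet (n + 1) (l ++ [1]) := by
  cases h with
  | base1 => exact BSet.base2
  | base2 => exact BSet.extC (by omega) BSet.base2
  | extC h2 hb => exact BSet.extC (by omega) (BSet.extC h2 hb)
  | extD h2 hb hc => exact BSet.extC (by omega) (BSet.extD h2 hb hc)

lemma bset_last_one {n : ℕ} {v : List ℕ} (h : BSet n v) (hn : 2 ≤ n)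
    (hv : v.getLastD 0 = 1) : ∃ m, BSet (n - 1) m ∧ v = m ++ [1] := by
  cases h with
  | base1 => omega
  | base2 => exact ⟨[1], BSet.base1, rfl⟩
  | extC h2 hb => exact ⟨_, by simpa using hb, rfl⟩
  | extD h2 hb hc =>
      exfalso
      rename_i n l t
      have ht : 1 ≤ t := bset_pos hb t (by simp)
      simp at hv
      omega

lemma getD_last (l : List ℕ) (h : l ≠ []) : l.getD (l.length - 1) 0 = l.getLastD 0 := by
  have hp : 0 < l.length := List.length_pos_iff.2 h
  rw [List.getD_eq_getElem l 0 (by omega), List.getLastD_eq_getLast?,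
    List.getLast?_eq_getLast h, List.getLast_eq_getElem]
  rfl

lemma getD_append_last (l : List ℕ) (a : ℕ) (h : l ≠ []) :
    (l ++ [a]).getD ((l ++ [a]).length - 2) 0 = l.getLastD 0 := by
  have hp : 0 < l.length := List.length_pos_iff.2 h
  have h1 : (l ++ [a]).length - 2 = l.length - 1 := by simp
  rw [h1, List.getD, List.getElem?_append_left (by omega), ← List.getD, getD_last l h]

lemma bset_stl_one {n : ℕ} {v : List ℕ} (h : BSet n v) (hlen : 3 ≤ v.length)
    (hstl : v.getD (v.length - 2) 0 = 1) : v.getLastD 0 = 1 := by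
  cases h with
  | base1 => simp at hlen
  | base2 => simp at hlen
  | extC _ _ => simp
  | extD h2 hb hc =>
      rename_i n l t
      rcases hc with hc | hc
      · exfalso; simp [hc] at hlen
      · exfalso
        have hl : l ≠ [] := by rintro rfl; simp at hc
        rw [getD_append_last _ _ hl] at hstl
        omega

lemma bset_finite (n : ℕ) : {l : List ℕ | BSet n l}.Finite := by
  induction n with
  | zero =>
      have : {l : List ℕ | BSet 0 l} = ∅ := by
        ext l
        simp only [Set.mem_setOf_eq, Set.mem_empty_iff_false, iff_false]
        intro h; cases h
      rw [this]; exact Set.finite_empty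
  | succ n ih =>
      apply Set.Finite.subset
        (((Set.finite_singleton [1]).union (Set.finite_singleton [1,1])).union
          ((ih.image (fun l => l ++ [1])).union
            (ih.image (fun l => l.dropLast ++ [l.getLastD 0 + 1]))))
      intro v hv
      cases hv with
      | base1 => left; left; rfl
      | base2 => left; right; rfl
      | extC h2 hb => right; left; exact ⟨_, hb, rfl⟩
      | extD h2 hb hc =>
          rename_i l t
          right; right
          exact ⟨l ++ [t], hb, by simp⟩

/-- `D(n) = {(1, t₁, …, t_{s-1}, t_s + 1) : (1, t₁, …, t_s) ∈ B(n-1), t_{s-1} > 1 or s = 1}`. -/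
def DSet (n : ℕ) : Set (List ℕ) :=
  {v | ∃ (l : List ℕ) (t : ℕ), BSet (n - 1) (l ++ [t]) ∧
        (l.length = 1 ∨ 1 < l.getLastD 0) ∧ v = l ++ [t + 1]}

lemma assoc2 (l : List ℕ) : l ++ [1, 1] = (l ++ [1]) ++ [1] := by simp

/-- For `n ≥ 4`: `|D(n)| = |B(n-1)| − |B(n-3)|`; the number of vectors of `B(n-1)`
whose last two entries both equal `1` is `|B(n-3)|`; and `D(n)` is in bijection with
the set of vectors of `B(n-1)` whose second-to-last entry is greater than `1`
(or which have length `2`). -/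
theorem card_DSet :
    ∀ n : ℕ, 4 ≤ n →
      (DSet n).ncard
          = {l : List ℕ | BSet (n - 1) l}.ncard - {l : List ℕ | BSet (n - 3) l}.ncard ∧
      {l : List ℕ | BSet (n - 1) l ∧ ∃ l' : List ℕ, l = l' ++ [1, 1]}.ncard
          = {l : List ℕ | BSet (n - 3) l}.ncard ∧
      ∃ f : List ℕ → List ℕ,
        Set.BijOn f (DSet n)
          {v : List ℕ | BSet (n - 1) v ∧ (v.length = 2 ∨ 1 < v.getD (v.length - 2) 0)} := by
  intro n hn
  obtain ⟨m, rfl⟩ : ∃ m, n = m + 4 := ⟨n - 4, by omega⟩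
  have e1 : m + 4 - 1 = m + 3 := rfl
  have e3 : m + 4 - 3 = m + 1 := rfl
  rw [e1, e3]
  set S11 : Set (List ℕ) := {l : List ℕ | BSet (m + 3) l ∧ ∃ l' : List ℕ, l = l' ++ [1, 1]}
    with hS11
  set T : Set (List ℕ) :=
    {v : List ℕ | BSet (m + 3) v ∧ (v.length = 2 ∨ 1 < v.getD (v.length - 2) 0)} with hT
  -- the bijection for S11
  have hg : Set.BijOn (fun v : List ℕ => v.dropLast.dropLast) S11
      {l : List ℕ | BSet (m + 1) l} := by
    refine ⟨?_, ?_, ?_⟩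
    · rintro v ⟨hv, l', rfl⟩
      obtain ⟨m1, hm1, he1⟩ := bset_last_one hv (by omega) (by simp)
      have hm1e : m1 = l' ++ [1] := by
        rw [assoc2] at he1
        have := congrArg List.dropLast he1
        simpa using this.symm
      subst hm1e
      obtain ⟨m2, hm2, he2⟩ := bset_last_one hm1 (by omega) (by simp)
      have hm2e : m2 = l' := by
        have := congrArg List.dropLast he2
        simpa using this.symm
      show (l' ++ [1, 1]).dropLast.dropLast ∈ _
      rw [assoc2]
      simp only [List.dropLast_concat]
      rw [← hm2e]
      exact hm2
    · rintro v ⟨hv, l1, rfl⟩ w ⟨hw, l2, rfl⟩ h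
      simp only [assoc2, List.dropLast_concat] at h
      rw [h]
    · intro w hw
      refine ⟨w ++ [1, 1], ⟨?_, w, rfl⟩, ?_⟩
      · rw [assoc2]
        exact bset_extC (bset_extC hw)
      · show (w ++ [1, 1]).dropLast.dropLast = w
        rw [assoc2]
        simp
  -- the bijection for DSet
  have hf : Set.BijOn (fun v : List ℕ => v.dropLast ++ [v.getLastD 0 - 1])
      (DSet (m + 4)) T := by
    refine ⟨?_, ?_, ?_⟩
    · rintro v ⟨l, t, hb, hc, rfl⟩
      have hfv : (l ++ [t + 1]).dropLast ++ [(l ++ [t + 1]).getLastD 0 - 1] = l ++ [t] := by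
        simp
      rw [show (fun v : List ℕ => v.dropLast ++ [v.getLastD 0 - 1]) (l ++ [t + 1])
        = l ++ [t] from hfv]
      refine ⟨hb, ?_⟩
      rcases hc with hc | hc
      · left; simp [hc]
      · right
        have hl : l ≠ [] := by rintro rfl; simp at hc
        rw [getD_append_last _ _ hl]
        exact hc
    · rintro v ⟨l1, t1, hb1, hc1, rfl⟩ w ⟨l2, t2, hb2, hc2, rfl⟩ h
      simp only [List.dropLast_concat, List.getLastD_concat, Nat.add_sub_cancel] at h
      obtain ⟨rfl, ht⟩ := List.append_inj' h rfl
      simp only [List.cons.injEq] at ht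
      rw [ht.1]
    · rintro w ⟨hw, hcond⟩
      have hne : w ≠ [] := by
        have := bset_len hw (by omega); intro e; rw [e] at this; simp at this
      obtain ⟨l, t, rfl⟩ : ∃ l t, w = l ++ [t] :=
        ⟨w.dropLast, w.getLast hne, (List.dropLast_append_getLast hne).symm⟩
      have hlen : 2 ≤ (l ++ [t]).length := bset_len hw (by omega)
      have hl : l ≠ [] := by rintro rfl; simp at hlen
      have hc : l.length = 1 ∨ 1 < l.getLastD 0 := by
        rcases hcond with hc | hc
        · left; simp at hc; exact hc
        · right; rwa [getD_append_last _ _ hl] at hc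
      refine ⟨l ++ [t + 1], ⟨l, t, hw, hc, rfl⟩, ?_⟩
      simp
  -- T is the complement of S11 inside B(m+3)
  have hTc : T = {l : List ℕ | BSet (m + 3) l} \ S11 := by
    ext v
    constructor
    · rintro ⟨hv, hcond⟩
      refine ⟨hv, ?_⟩
      rintro ⟨-, l', rfl⟩
      rcases hcond with hc | hc
      · have hl0 : l'.length = 0 := by simpa using hc
        have : l' = [] := List.length_eq_zero_iff.1 hl0
        subst this
        have := bset_sum hv
        simp only [List.nil_append, List.sum_cons, List.sum_nil] at this
        omega
      · rw [assoc2] at hc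
        rw [getD_append_last _ _ (by simp)] at hc
        simp at hc
    · rintro ⟨hv, hns⟩
      refine ⟨hv, ?_⟩
      by_contra hcond
      push_neg at hcond
      obtain ⟨hlen2, hstl⟩ := hcond
      have hlen : 2 ≤ v.length := bset_len hv (by omega)
      have hlen3 : 3 ≤ v.length := by omega
      have hmem : v.getD (v.length - 2) 0 ∈ v := by
        rw [List.getD_eq_getElem v 0 (by omega)]
        exact List.getElem_mem _
      have hstl1 : v.getD (v.length - 2) 0 = 1 := by
        have := bset_pos hv _ hmem; omega
      have hlast := bset_stl_one hv hlen3 hstl1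
      obtain ⟨m1, hm1, rfl⟩ := bset_last_one hv (by omega) hlast
      have hm1ne : m1 ≠ [] := by
        rintro rfl; simp at hlen3
      rw [getD_append_last _ _ hm1ne] at hstl1
      obtain ⟨m2, hm2, rfl⟩ := bset_last_one hm1 (by omega) hstl1
      exact hns ⟨hv, m2, by simp⟩
  -- assemble
  have hS11card : S11.ncard = {l : List ℕ | BSet (m + 1) l}.ncard := by
    rw [← hg.image_eq, Set.ncard_image_of_injOn hg.injOn]
  refine ⟨?_, hS11card, ⟨_, hf⟩⟩
  have hDT : (DSet (m + 4)).ncard = T.ncard := by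
    rw [← hf.image_eq, Set.ncard_image_of_injOn hf.injOn]
  have hsub : S11 ⊆ {l : List ℕ | BSet (m + 3) l} := fun v hv => hv.1
  rw [hDT, hTc, Set.ncard_diff hsub ((bset_finite (m + 3)).subset hsub), hS11card]
end

section
/- For every n ≥ 1, B(n) consists exactly of all integer vectors (1, t_1, …, t_s) with all entries positive, 1 + t_1 + t_2 + ⋯ + t_s = n, and having the property that if t_i = 1 for some i, then t_j = 1 for all j ≥ i. -/
lemma gA (l l' : List ℕ) (i : ℕ) (h : i < l.length) : (l ++ l').getD i 0 = l.getD i 0 := by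
  simp [List.getD_eq_getElem?_getD, List.getElem?_append_left h]

lemma gC (l : List ℕ) (t : ℕ) : (l ++ [t]).getD l.length 0 = t := by
  simp [List.getD_eq_getElem?_getD, List.getElem?_append_right]

lemma gL (l : List ℕ) (h : l ≠ []) : l.getLastD 0 = l.getD (l.length - 1) 0 := by
  induction l using List.reverseRecOn with
  | nil => simp at h
  | append_singleton l a ih =>
    simp [List.getLastD_concat, List.getD_eq_getElem?_getD, List.getElem?_append_right]

lemma getD_mem (l : List ℕ) (i : ℕ) (h : i < l.length) : l.getD i 0 ∈ l := by
  rw [List.getD_eq_getElem l 0 h]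
  exact List.getElem_mem h

/-- The right-hand side predicate. -/
def Good (n : ℕ) (l : List ℕ) : Prop :=
  l.getD 0 0 = 1 ∧ l ≠ [] ∧ (∀ x ∈ l, 0 < x) ∧ l.sum = n ∧
    ∀ i j : ℕ, 1 ≤ i → i ≤ j → j < l.length → l.getD i 0 = 1 → l.getD j 0 = 1

lemma bset_good {n : ℕ} {l : List ℕ} (h : BSet n l) : Good n l := by
  induction h with
  | base1 =>
    refine ⟨rfl, by simp, by simp, rfl, ?_⟩
    intro i j hi hij hj h1; simp at hj; omega
  | base2 =>
    refine ⟨rfl, by simp, by simp, rfl, ?_⟩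
    intro i j hi hij hj h1
    simp only [List.length_cons, List.length_nil] at hj
    have : j = 1 := by omega
    subst this
    rfl
  | @extC n l h2 hB ih =>
    obtain ⟨h0, hne, hpos, hsum, hones⟩ := ih
    have hlen : 0 < l.length := List.length_pos_iff.mpr hne
    refine ⟨by rw [gA _ _ _ hlen]; exact h0, by simp, ?_, by simp [hsum], ?_⟩
    · intro x hx
      rcases List.mem_append.mp hx with hx | hx
      · exact hpos x hx
      · simp at hx; omega
    · intro i j hi hij hj h1
      simp only [List.length_append, List.length_singleton] at hj
      rcases Nat.lt_or_ge j l.length with hj' | hj'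
      · have hi' : i < l.length := lt_of_le_of_lt hij hj'
        rw [gA _ _ _ hi'] at h1
        rw [gA _ _ _ hj']
        exact hones i j hi hij hj' h1
      · have hje : j = l.length := by omega
        rw [hje, gC]
  | @extD n l t h2 hB hside ih =>
    obtain ⟨h0, hne0, hpos, hsum, hones⟩ := ih
    have hlne : l ≠ [] := by
      rintro rfl
      rcases hside with h | h <;> simp at h
    have hlen : 0 < l.length := List.length_pos_iff.mpr hlne
    have ht : 0 < t := hpos t (by simp)
    have hkey : ∀ i, 1 ≤ i → i < l.length → (l ++ [t]).getD i 0 ≠ 1 := by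
      intro i hi hil h1
      have hlast : (l ++ [t]).getD (l.length - 1) 0 = 1 :=
        hones i (l.length - 1) hi (by omega) (by simp [List.length_append]) h1
      rw [gA _ _ _ (by omega)] at hlast
      rcases hside with h | h
      · omega
      · rw [gL l hlne] at h; omega
    refine ⟨?_, by simp, ?_, ?_, ?_⟩
    · rw [gA _ _ _ hlen]; rw [gA _ _ _ hlen] at h0; exact h0
    · intro x hx
      rcases List.mem_append.mp hx with hx | hx
      · exact hpos x (List.mem_append.mpr (Or.inl hx))
      · simp at hx; omega
    · simp only [List.sum_append, List.sum_cons, List.sum_nil] at hsum ⊢; omega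
    · intro i j hi hij hj h1
      simp only [List.length_append, List.length_singleton] at hj
      rcases Nat.lt_or_ge i l.length with hi' | hi'
      · exfalso
        apply hkey i hi hi'
        rw [gA _ _ _ hi'] at h1
        rw [gA _ _ _ hi']
        exact h1
      · have hie : i = l.length := by omega
        subst hie
        rw [gC] at h1
        omega

lemma good_bset : ∀ n : ℕ, 1 ≤ n → ∀ l : List ℕ, Good n l → BSet n l := by
  intro n
  induction n using Nat.strong_induction_on with
  | _ n IH =>
  intro hn l hg
  obtain ⟨h0, hne, hpos, hsum, hones⟩ := hg
  match n, hn with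
  | 1, _ =>
    obtain ⟨a, l1, rfl⟩ := List.exists_cons_of_ne_nil hne
    simp only [List.getD_cons_zero] at h0
    subst h0
    have : l1 = [] := by
      cases l1 with
      | nil => rfl
      | cons b l2 =>
        exfalso
        have hb := hpos b (by simp)
        simp only [List.sum_cons] at hsum
        omega
    subst this
    exact BSet.base1
  | 2, _ =>
    obtain ⟨a, l1, rfl⟩ := List.exists_cons_of_ne_nil hne
    simp only [List.getD_cons_zero] at h0
    subst h0
    cases l1 with
    | nil => simp at hsum
    | cons b l2 =>
      have hb := hpos b (by simp)
      simp only [List.sum_cons] at hsum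
      have : l2 = [] := by
        cases l2 with
        | nil => rfl
        | cons c l3 =>
          exfalso
          have hc := hpos c (by simp)
          simp only [List.sum_cons] at hsum
          omega
      subst this
      simp only [List.sum_nil] at hsum
      have : b = 1 := by omega
      subst this
      exact BSet.base2
  | (m + 3), _ =>
    obtain ⟨l', t, rfl⟩ : ∃ l' t, l = l' ++ [t] :=
      ⟨l.dropLast, l.getLast hne, (List.dropLast_append_getLast hne).symm⟩
    have hl'ne : l' ≠ [] := by
      rintro rfl
      simp only [List.nil_append, List.getD_cons_zero] at h0
      simp only [List.nil_append, List.sum_cons, List.sum_nil] at hsum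
      omega
    have hlen' : 0 < l'.length := List.length_pos_iff.mpr hl'ne
    have ht : 0 < t := hpos t (by simp)
    have hsum' : l'.sum + t = m + 3 := by
      simp only [List.sum_append, List.sum_cons, List.sum_nil] at hsum; omega
    have h0' : l'.getD 0 0 = 1 := by rw [gA _ _ _ hlen'] at h0; exact h0
    rcases eq_or_lt_of_le (show 1 ≤ t from ht) with ht1 | ht2
    · -- t = 1
      have hgood : Good (m + 2) l' := by
        refine ⟨h0', hl'ne, fun x hx => hpos x (List.mem_append.mpr (Or.inl hx)), by omega, ?_⟩
        intro i j hi hij hj h1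
        have h1' : (l' ++ [t]).getD i 0 = 1 := by
          rw [gA _ _ _ (lt_of_le_of_lt hij hj)]; exact h1
        have := hones i j hi hij (by simp only [List.length_append]; omega) h1'
        rw [gA _ _ _ hj] at this
        exact this
      have hB := IH (m + 2) (by omega) (by omega) l' hgood
      have hC := BSet.extC (n := m + 2) (by omega) hB
      rw [← ht1]
      exact hC
    · -- t ≥ 2
      have hkey : ∀ i, 1 ≤ i → i < l'.length → (l' ++ [t]).getD i 0 ≠ 1 := by
        intro i hi hil h1
        have := hones i l'.length hi (by omega) (by simp) h1
        rw [gC] at this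
        omega
      have hgood : Good (m + 2) (l' ++ [t - 1]) := by
        refine ⟨by rw [gA _ _ _ hlen']; exact h0', by simp, ?_, ?_, ?_⟩
        · intro x hx
          rcases List.mem_append.mp hx with hx | hx
          · exact hpos x (List.mem_append.mpr (Or.inl hx))
          · simp at hx; omega
        · simp only [List.sum_append, List.sum_cons, List.sum_nil]; omega
        · intro i j hi hij hj h1
          simp only [List.length_append, List.length_singleton] at hj
          rcases Nat.lt_or_ge i l'.length with hi' | hi'
          · exfalso
            apply hkey i hi hi'
            rw [gA _ _ _ hi'] at h1
            rw [gA _ _ _ hi']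
            exact h1
          · have hie : j = i := by omega
            rw [hie]
            exact h1
      have hside : l'.length = 1 ∨ 1 < l'.getLastD 0 := by
        by_cases hlen1 : l'.length = 1
        · exact Or.inl hlen1
        · right
          have hlen2 : 2 ≤ l'.length := by omega
          have hv : (l' ++ [t]).getD (l'.length - 1) 0 ≠ 1 :=
            hkey _ (by omega) (by omega)
          rw [gA _ _ _ (by omega)] at hv
          have hmem : l'.getD (l'.length - 1) 0 ∈ l' := getD_mem _ _ (by omega)
          have hp := hpos _ (List.mem_append.mpr (Or.inl hmem))
          rw [gL l' hl'ne]
          omega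
      have hB := IH (m + 2) (by omega) (by omega) (l' ++ [t - 1]) hgood
      have hD := BSet.extD (n := m + 2) (by omega) hB hside
      have hte : t - 1 + 1 = t := by omega
      rw [hte] at hD
      exact hD

/-- For `n ≥ 1`, `B(n)` consists exactly of the integer vectors `(1, t₁, …, t_s)` with
positive entries summing to `n` such that if some entry `t_i = 1` then all later
entries equal `1`. -/
theorem BSet_characterization :
    ∀ n : ℕ, 1 ≤ n → ∀ l : List ℕ,
      BSet n l ↔
        (l.getD 0 0 = 1 ∧ l ≠ [] ∧ (∀ x ∈ l, 0 < x) ∧ l.sum = n ∧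
          ∀ i j : ℕ, 1 ≤ i → i ≤ j → j < l.length → l.getD i 0 = 1 → l.getD j 0 = 1) :=
  fun n hn l => ⟨fun h => bset_good h, fun h => good_bset n hn l h⟩
end

section
/- For every n ≥ 1, L(n) ⊆ B(n); consequently ℓ(n) = |L(n)| is at most the n-th Fibonacci number F_n (with F_1 = F_2 = 1). -/
/-- `IsMacaulayRep a d j b` says that
`a = C(b d, d) + C(b (d-1), d-1) + ⋯ + C(b j, j)` with
`b d > b (d-1) > ⋯ > b j ≥ j ≥ 1`. -/
def IsMacaulayRep (a d j : ℕ) (b : ℕ → ℕ) : Prop :=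
  1 ≤ j ∧ j ≤ d ∧ j ≤ b j ∧ (∀ i, j ≤ i → i < d → b i < b (i + 1)) ∧
  a = ∑ i ∈ Finset.Icc j d, Nat.choose (b i) i

/-- Given the `d`-th Macaulay representation data `(j, b)` of a positive integer `a`,
this is `a^⟨d⟩ = C(b d + 1, d+1) + C(b (d-1) + 1, d) + ⋯ + C(b j + 1, j+1)`. -/
def macaulayBoundOf (d j : ℕ) (b : ℕ → ℕ) : ℕ :=
  ∑ i ∈ Finset.Icc j d, Nat.choose (b i + 1) (i + 1)

/-- An `h`-vector: a finite sequence `(h₀, h₁, …, h_s)` of positive integers with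
`h₀ = 1` and `h_{t+1} ≤ h_t^⟨t⟩` for all `1 ≤ t ≤ s - 1` (Macaulay's condition (C)). -/
def IsHVector (h : List ℕ) : Prop :=
  h ≠ [] ∧ (∀ x ∈ h, 0 < x) ∧ h.getD 0 0 = 1 ∧
  ∀ t : ℕ, 1 ≤ t → t + 1 < h.length →
    ∃ (j : ℕ) (b : ℕ → ℕ), IsMacaulayRep (h.getD t 0) t j b ∧
      h.getD (t + 1) 0 ≤ macaulayBoundOf t j b

/-- `L(n)`: the set of `h`-vectors whose entries sum to `n`. -/
def LSet (n : ℕ) : Set (List ℕ) := {h | IsHVector h ∧ h.sum = n}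

/-- `L_k(n)`: the set of `h`-vectors in `L(n)` with `h₁ = k`. -/
def LkSet (k n : ℕ) : Set (List ℕ) := {h | h ∈ LSet n ∧ h.getD 1 0 = k}

lemma sum_one_of_pos {h : List ℕ} (hpos : ∀ x ∈ h, 0 < x) (hs : h.sum = 1) : h = [1] := by
  match h with
  | [] => simp at hs
  | a :: t =>
    simp only [List.sum_cons] at hs
    have ha : 0 < a := hpos a (by simp)
    have ha1 : a = 1 := by omega
    have ht : t.sum = 0 := by omega
    have htn : t = [] := by
      cases t with
      | nil => rfl
      | cons b r =>
        have := hpos b (by simp)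
        simp only [List.sum_cons] at ht; omega
    simp [ha1, htn]

lemma macaulayBoundOf_one {d j : ℕ} {b : ℕ → ℕ} (h : IsMacaulayRep 1 d j b) :
    macaulayBoundOf d j b = 1 := by
  obtain ⟨hj1, hjd, hbj, hmono, heq⟩ := h
  have hble : ∀ i, j ≤ i → i ≤ d → i ≤ b i := by
    intro i hji hid
    induction i, hji using Nat.le_induction with
    | base => exact hbj
    | succ i hji ih =>
      have h1 := hmono i hji (by omega)
      have h2 := ih (by omega)
      omega
  have hone : ∀ i ∈ Finset.Icc j d, 1 ≤ Nat.choose (b i) i := by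
    intro i hi
    simp only [Finset.mem_Icc] at hi
    exact Nat.choose_pos (hble i hi.1 hi.2)
  have hcard := Finset.card_nsmul_le_sum _ _ _ hone
  rw [← heq, Nat.card_Icc, smul_eq_mul, mul_one] at hcard
  have hjd' : j = d := by omega
  subst hjd'
  rw [Finset.Icc_self, Finset.sum_singleton] at heq
  have hbd : b j = j := by
    by_contra hne
    have h1 : j + 1 ≤ b j := by omega
    have h2 := Nat.choose_le_choose j h1
    rw [Nat.choose_succ_self_right] at h2
    omega
  rw [macaulayBoundOf, Finset.Icc_self, Finset.sum_singleton, hbd, Nat.choose_self]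

def incL (l : List ℕ) : List ℕ := l.dropLast ++ [l.getLastD 0 + 1]

def BsS (n : ℕ) : Set (List ℕ) := {l | BSet n l}
def EgS (n : ℕ) : Set (List ℕ) :=
  {l | BSet n l ∧ (l.dropLast.length = 1 ∨ 1 < l.dropLast.getLastD 0)}
def LbS (n : ℕ) : Set (List ℕ) := {l | BSet n l ∧ 1 < l.getLastD 0}

lemma BSet_two_le_length : ∀ {n : ℕ} {l : List ℕ}, BSet n l → 2 ≤ n → 2 ≤ l.length := by
  intro n l h
  induction h with
  | base1 => omega
  | base2 => simp
  | extC h2 hb ih =>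
    intro _
    have := ih h2
    simp only [List.length_append, List.length_cons, List.length_nil]
    omega
  | extD h2 hb hc ih =>
    intro _
    have := ih h2
    simp only [List.length_append, List.length_cons, List.length_nil] at this ⊢
    omega

lemma BsS_sub {n : ℕ} (hn : 2 ≤ n) :
    BsS (n + 1) ⊆ (fun l => l ++ [1]) '' BsS n ∪ incL '' EgS n := by
  intro m hm
  cases hm with
  | base1 => omega
  | base2 => omega
  | extC h2 hb => exact Or.inl ⟨_, hb, rfl⟩
  | extD h2 hb hc =>
    refine Or.inr ⟨_, ⟨hb, by rw [List.dropLast_concat]; exact hc⟩, ?_⟩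
    simp [incL, List.dropLast_concat, List.getLastD_concat]

lemma EgS_sub {n : ℕ} (hn : 2 ≤ n) :
    EgS (n + 1) ⊆ incL '' EgS n ∪ (fun l => l ++ [1]) '' LbS n := by
  intro m hmm
  obtain ⟨hm, hcond⟩ := hmm
  cases hm with
  | base1 => omega
  | base2 => omega
  | extC h2 hb =>
    rw [List.dropLast_concat] at hcond
    have hlen := BSet_two_le_length hb h2
    refine Or.inr ⟨_, ⟨hb, ?_⟩, rfl⟩
    rcases hcond with hc | hc
    · omega
    · exact hc
  | extD h2 hb hc =>
    refine Or.inl ⟨_, ⟨hb, by rw [List.dropLast_concat]; exact hc⟩, ?_⟩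
    simp [incL, List.dropLast_concat, List.getLastD_concat]

lemma LbS_sub {n : ℕ} (hn : 2 ≤ n) : LbS (n + 1) ⊆ incL '' EgS n := by
  intro m hmm
  obtain ⟨hm, hlast⟩ := hmm
  cases hm with
  | base1 => omega
  | base2 => omega
  | extC h2 hb =>
    rw [List.getLastD_concat] at hlast
    omega
  | extD h2 hb hc =>
    refine ⟨_, ⟨hb, by rw [List.dropLast_concat]; exact hc⟩, ?_⟩
    simp [incL, List.dropLast_concat, List.getLastD_concat]

lemma triple : ∀ n : ℕ, 2 ≤ n → (BsS n).Finite ∧ (BsS n).ncard ≤ Nat.fib n ∧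
    (EgS n).ncard ≤ Nat.fib (n - 1) ∧ (LbS n).ncard ≤ Nat.fib (n - 2) := by
  intro n hn
  induction n, hn using Nat.le_induction with
  | base =>
    have hsub : BsS 2 ⊆ {[1, 1]} := by
      intro m hm
      cases hm with
      | base2 => rfl
      | extC h2 hb => omega
      | extD h2 hb hc => omega
    have hfin : (BsS 2).Finite := (Set.finite_singleton _).subset hsub
    have hb2 : (BsS 2).ncard ≤ 1 := by
      have := Set.ncard_le_ncard hsub (Set.finite_singleton _)
      rwa [Set.ncard_singleton] at this
    refine ⟨hfin, by simpa using hb2, ?_, ?_⟩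
    · have hsub' : EgS 2 ⊆ BsS 2 := fun _ h => h.1
      have h := Set.ncard_le_ncard hsub' hfin
      have hf : Nat.fib (2 - 1) = 1 := by norm_num
      omega
    · have : LbS 2 = ∅ := by
        ext m
        simp only [Set.mem_empty_iff_false, iff_false]
        rintro ⟨hm, hl⟩
        have hm2 : m = [1, 1] := hsub hm
        rw [hm2] at hl
        have : ([1, 1] : List ℕ).getLastD 0 = 1 := rfl
        omega
      rw [this, Set.ncard_empty]
      exact Nat.zero_le _
  | succ n hn ih =>
    obtain ⟨m, rfl⟩ : ∃ m, n = m + 2 := ⟨n - 2, by omega⟩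
    obtain ⟨hfin, ha, he, hl⟩ := ih
    simp only [show m + 2 - 1 = m + 1 from rfl, show m + 2 - 2 = m from rfl] at he hl
    have hfinEg : (EgS (m + 2)).Finite := hfin.subset (fun _ h => h.1)
    have hfinLb : (LbS (m + 2)).Finite := hfin.subset (fun _ h => h.1)
    have h1 := BsS_sub (n := m + 2) (by omega)
    have h2 := EgS_sub (n := m + 2) (by omega)
    have h3 := LbS_sub (n := m + 2) (by omega)
    have hfinU1 : ((fun l => l ++ [1]) '' BsS (m+2) ∪ incL '' EgS (m+2)).Finite :=
      (hfin.image _).union (hfinEg.image _)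
    have hfinU2 : (incL '' EgS (m+2) ∪ (fun l => l ++ [1]) '' LbS (m+2)).Finite :=
      (hfinEg.image _).union (hfinLb.image _)
    have hfinB : (BsS (m + 3)).Finite := hfinU1.subset h1
    refine ⟨hfinB, ?_, ?_, ?_⟩
    · have := le_trans (Set.ncard_le_ncard h1 hfinU1)
        (le_trans (Set.ncard_union_le _ _)
          (Nat.add_le_add (Set.ncard_image_le hfin) (Set.ncard_image_le hfinEg)))
      calc (BsS (m + 3)).ncard ≤ (BsS (m+2)).ncard + (EgS (m+2)).ncard := this
        _ ≤ Nat.fib (m + 2) + Nat.fib (m + 1) := Nat.add_le_add ha he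
        _ = Nat.fib (m + 3) := by rw [Nat.add_comm]; exact (Nat.fib_add_two).symm
    · have := le_trans (Set.ncard_le_ncard h2 hfinU2)
        (le_trans (Set.ncard_union_le _ _)
          (Nat.add_le_add (Set.ncard_image_le hfinEg) (Set.ncard_image_le hfinLb)))
      calc (EgS (m + 3)).ncard ≤ (EgS (m+2)).ncard + (LbS (m+2)).ncard := this
        _ ≤ Nat.fib (m + 1) + Nat.fib m := Nat.add_le_add he hl
        _ = Nat.fib (m + 3 - 1) := by rw [Nat.add_comm]; exact (Nat.fib_add_two).symm
    · have := le_trans (Set.ncard_le_ncard h3 (hfinEg.image _)) (Set.ncard_image_le hfinEg)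
      calc (LbS (m + 3)).ncard ≤ (EgS (m+2)).ncard := this
        _ ≤ Nat.fib (m + 3 - 2) := he

lemma LSet_mem_BSet : ∀ n : ℕ, 1 ≤ n → ∀ h ∈ LSet n, BSet n h := by
  intro n hn
  induction n, hn using Nat.le_induction with
  | base =>
    intro h hm
    obtain ⟨⟨hne, hpos, h0, _⟩, hsum⟩ := hm
    rw [sum_one_of_pos hpos hsum]
    exact BSet.base1
  | succ n hn ih =>
    intro h hm
    obtain ⟨⟨hne, hpos, h0, hmac⟩, hsum⟩ := hm
    rcases Nat.lt_or_ge n 2 with h2 | h2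
    · -- n = 1, h ∈ LSet 2 so h = [1,1]
      have hn1 : n = 1 := by omega
      subst hn1
      rcases h with _ | ⟨a, t⟩
      · exact absurd rfl hne
      · simp only [List.getD_cons_zero] at h0
        subst h0
        simp only [List.sum_cons] at hsum
        have htpos : ∀ x ∈ t, 0 < x := fun x hx => hpos x (by simp [hx])
        rw [sum_one_of_pos htpos (by omega)]
        exact BSet.base2
    · -- n ≥ 2
      have hlen2 : 2 ≤ h.length := by
        rcases h with _ | ⟨a, t⟩
        · exact absurd rfl hne
        · rcases t with _ | ⟨b, r⟩
          · simp only [List.getD_cons_zero] at h0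
            simp [h0] at hsum
            omega
          · simp
      set l := h.dropLast with hldef
      set t := h.getLast hne with htdef
      have hh : h = l ++ [t] := (List.dropLast_append_getLast hne).symm
      have hhl : h.length = l.length + 1 := by rw [hh]; simp
      have hll : 1 ≤ l.length := by omega
      have hlsum : l.sum + t = n + 1 := by
        rw [hh, List.sum_append] at hsum
        simpa using hsum
      have hl0 : l.getD 0 0 = 1 := by
        rw [hh, List.getD_append _ _ _ 0 (by omega)] at h0
        exact h0
      have htpos : 1 ≤ t := hpos t (by rw [hh]; simp)
      have hlne : l ≠ [] := by
        intro e; rw [e] at hll; simp at hll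
      rcases Nat.lt_or_ge t 2 with ht2 | ht2
      · -- t = 1 : extC
        have ht1 : t = 1 := by omega
        have hlmem : l ∈ LSet n := by
          refine ⟨⟨hlne, ?_, hl0, ?_⟩, by omega⟩
          · intro x hx; exact hpos x (by rw [hh]; exact List.mem_append_left _ hx)
          · intro t' ht' htl
            obtain ⟨j, b, hrep, hbd⟩ := hmac t' ht' (by omega)
            refine ⟨j, b, ?_, ?_⟩
            · rwa [hh, List.getD_append _ _ _ t' (by omega)] at hrep
            · rwa [hh, List.getD_append _ _ _ (t'+1) (by omega)] at hbd
        rw [hh, ht1]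
        exact BSet.extC (by omega) (ih l hlmem)
      · -- t ≥ 2 : extD
        have hh'mem : l ++ [t-1] ∈ LSet n := by
          refine ⟨⟨by simp, ?_, ?_, ?_⟩, ?_⟩
          · intro x hx
            rcases List.mem_append.mp hx with hx | hx
            · exact hpos x (by rw [hh]; exact List.mem_append_left _ hx)
            · simp at hx; omega
          · rw [List.getD_append _ _ _ 0 (by omega)]; exact hl0
          · intro t' ht' htl
            have htl2 : t' + 1 < l.length + 1 := by
              simpa using htl
            obtain ⟨j, b, hrep, hbd⟩ := hmac t' ht' (by omega)
            refine ⟨j, b, ?_, ?_⟩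
            · rw [List.getD_append _ _ _ t' (by omega)]
              rwa [hh, List.getD_append _ _ _ t' (by omega)] at hrep
            · refine le_trans ?_ hbd
              rcases Nat.lt_or_ge (t'+1) l.length with hlt | hge
              · rw [List.getD_append _ _ _ (t'+1) hlt, hh,
                  List.getD_append _ _ _ (t'+1) hlt]
              · have he : t' + 1 = l.length := by omega
                rw [List.getD_append_right _ _ _ _ hge, hh,
                  List.getD_append_right _ _ _ _ hge, he]
                simp
          · have hs : (l ++ [t-1]).sum = l.sum + (t-1) := by simp
            omega
        have hcond : l.length = 1 ∨ 1 < l.getLastD 0 := by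
          by_contra hc
          push_neg at hc
          obtain ⟨hc1, hc2⟩ := hc
          have hl2 : 2 ≤ l.length := by omega
          have hu1 : l.getD (l.length - 1) 0 = 1 := by
            rw [List.getD_eq_getElem _ _ (by omega), ← List.getLast_eq_getElem hlne]
            have hup : 0 < l.getLast hlne := hpos _ (by rw [hh]; exact List.mem_append_left _ (List.getLast_mem hlne))
            have hul : l = l.dropLast ++ [l.getLast hlne] := (List.dropLast_append_getLast hlne).symm
            have hgl : l.getLastD 0 = l.getLast hlne := by
              conv_lhs => rw [hul]
              rw [List.getLastD_concat]
            omega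
          obtain ⟨j, b, hrep, hbd⟩ := hmac (l.length - 1) (by omega) (by omega)
          have hidx : l.length - 1 + 1 = l.length := by omega
          rw [hidx] at hbd
          rw [hh, List.getD_append _ _ _ _ (by omega), hu1] at hrep
          rw [hh, List.getD_append_right _ _ _ _ (le_refl _), Nat.sub_self,
            List.getD_cons_zero, macaulayBoundOf_one hrep] at hbd
          omega
        have hb' := ih _ hh'mem
        have hte : t - 1 + 1 = t := by omega
        rw [hh, ← hte]
        exact BSet.extD (by omega) hb' hcond


/-- For every `n ≥ 1`, `L(n) ⊆ B(n)`; in particular `ℓ(n) = |L(n)|` is at most the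
`n`-th Fibonacci number. -/
theorem LSet_subset_BSet_and_le_fib :
    ∀ n : ℕ, 1 ≤ n →
      LSet n ⊆ {l : List ℕ | BSet n l} ∧ (LSet n).ncard ≤ Nat.fib n := by
  intro n hn
  have hsub : LSet n ⊆ {l : List ℕ | BSet n l} := fun h hm => LSet_mem_BSet n hn h hm
  refine ⟨hsub, ?_⟩
  rcases Nat.lt_or_ge n 2 with h2 | h2
  · have hn1 : n = 1 := by omega
    subst hn1
    have hsub1 : LSet 1 ⊆ {[1]} := by
      intro m hm
      have hb := LSet_mem_BSet 1 le_rfl m hm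
      cases hb with
      | base1 => rfl
      | extC h2 hb => omega
      | extD h2 hb hc => omega
    have h := Set.ncard_le_ncard hsub1 (Set.finite_singleton _)
    rw [Set.ncard_singleton] at h
    simpa using h
  · obtain ⟨hfin, ha, _, _⟩ := triple n h2
    exact le_trans (Set.ncard_le_ncard hsub hfin) ha
end

section
/- Let k be a field, R = k[x,y], and let I be an (x,y)-primary monomial ideal of R. Then the integer partition (λ_1(I), λ_2(I), …) has all its (positive) parts pairwise distinct if and only if I is a lex ideal. -/
open MvPolynomial

/-- A monomial ideal of `k[x,y]`: an ideal generated by monomials. -/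
def IsMonomialIdeal {k : Type*} [Field k] (I : Ideal (MvPolynomial (Fin 2) k)) : Prop :=
  ∃ S : Set (Fin 2 →₀ ℕ),
    I = Ideal.span ((fun m => (MvPolynomial.monomial m (1 : k))) '' S)

/-- An ideal of `k[x,y]` is `(x,y)`-primary (in the sense used here) if it contains a
power of `x` and a power of `y`. -/
def IsXYPrimary {k : Type*} [Field k] (I : Ideal (MvPolynomial (Fin 2) k)) : Prop :=
  ∃ a b : ℕ, (X 0 : MvPolynomial (Fin 2) k) ^ a ∈ I ∧ (X 1 : MvPolynomial (Fin 2) k) ^ b ∈ I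

/-- `λ_i(I) = |{ j ≥ 0 : x^(i-1) y^j ∉ I }|` (for `i ≥ 1`), where `x = X 0`, `y = X 1`. -/
noncomputable def lam {k : Type*} [Field k] (I : Ideal (MvPolynomial (Fin 2) k)) (i : ℕ) : ℕ :=
  Set.ncard {j : ℕ | (X 0 : MvPolynomial (Fin 2) k) ^ (i - 1) * (X 1) ^ j ∉ I}

/-- A lex ideal of `k[x,y]`: for each degree `j`, the degree-`j` monomials in `I`
form an initial segment of the degree-`j` monomials `x^j > x^(j-1)y > ⋯ > y^j` in
descending lexicographic order (with `x = X 0 > y = X 1`); the monomial `x^a y^b`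
of degree `j = a + b` occupies position `b` in this order. -/
def IsLexIdeal {k : Type*} [Field k] (I : Ideal (MvPolynomial (Fin 2) k)) : Prop :=
  ∀ j : ℕ, ∃ m : ℕ, ∀ a b : ℕ, a + b = j →
    ((X 0 : MvPolynomial (Fin 2) k) ^ a * (X 1) ^ b ∈ I ↔ b < m)

namespace LamLexAux

/-- least `b` with `P a b` -/
noncomputable def ff (P : ℕ → ℕ → Prop) (a : ℕ) : ℕ := sInf {b | P a b}

variable {P : ℕ → ℕ → Prop}

lemma ffP (hne : ∀ a : ℕ, ∃ b, P a b) (a : ℕ) : P a (ff P a) :=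
  Nat.sInf_mem (hne a)

lemma P_iff (hmono : ∀ a b c d : ℕ, P a b → P (a + c) (b + d))
    (hne : ∀ a : ℕ, ∃ b, P a b) (a j : ℕ) : P a j ↔ ff P a ≤ j := by
  constructor
  · intro h; exact Nat.sInf_le h
  · intro h
    obtain ⟨d, hd⟩ := Nat.exists_eq_add_of_le h
    have := hmono a (ff P a) 0 d (ffP hne a)
    simpa [hd] using this

lemma not_P_iff (hmono : ∀ a b c d : ℕ, P a b → P (a + c) (b + d))
    (hne : ∀ a : ℕ, ∃ b, P a b) (a j : ℕ) : ¬ P a j ↔ j < ff P a := by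
  rw [P_iff hmono hne]; omega

lemma ff_anti (hmono : ∀ a b c d : ℕ, P a b → P (a + c) (b + d))
    (hne : ∀ a : ℕ, ∃ b, P a b) {a a' : ℕ} (h : a ≤ a') : ff P a' ≤ ff P a := by
  obtain ⟨c, rfl⟩ := Nat.exists_eq_add_of_le h
  have := hmono a (ff P a) c 0 (ffP hne a)
  simpa [P_iff hmono hne] using this

lemma ff_strict (hmono : ∀ a b c d : ℕ, P a b → P (a + c) (b + d))
    (hne : ∀ a : ℕ, ∃ b, P a b)
    (Hd : ∀ a a' : ℕ, a ≠ a' → 0 < ff P a → 0 < ff P a' → ff P a ≠ ff P a')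
    (a : ℕ) (hpos : 0 < ff P a) : ff P (a + 1) < ff P a := by
  have hle : ff P (a + 1) ≤ ff P a := ff_anti hmono hne (show a ≤ a + 1 by omega)
  rcases eq_or_lt_of_le hle with heq | hlt
  · exact absurd heq (Hd (a + 1) a (by omega) (by omega) hpos)
  · exact hlt

lemma dc (hmono : ∀ a b c d : ℕ, P a b → P (a + c) (b + d))
    (hne : ∀ a : ℕ, ∃ b, P a b)
    (Hd : ∀ a a' : ℕ, a ≠ a' → 0 < ff P a → 0 < ff P a' → ff P a ≠ ff P a')
    (a b : ℕ) (h : P a (b + 1)) : P (a + 1) b := by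
  rw [P_iff hmono hne] at h ⊢
  by_cases hpos : 0 < ff P a
  · have := ff_strict hmono hne Hd a hpos
    omega
  · have := ff_anti hmono hne (show a ≤ a + 1 by omega)
    omega

lemma dcIter (hmono : ∀ a b c d : ℕ, P a b → P (a + c) (b + d))
    (hne : ∀ a : ℕ, ∃ b, P a b)
    (Hd : ∀ a a' : ℕ, a ≠ a' → 0 < ff P a → 0 < ff P a' → ff P a ≠ ff P a')
    (d : ℕ) : ∀ a b : ℕ, P a (b + d) → P (a + d) b := by
  induction d with
  | zero => intro a b h; simpa using h
  | succ d ih =>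
    intro a b h
    have h1 : P a ((b + 1) + d) := by
      rw [show (b + 1) + d = b + (d + 1) from by omega]; exact h
    have h2 : P (a + d) (b + 1) := ih a (b + 1) h1
    have h3 := dc hmono hne Hd (a + d) b h2
    rw [show a + (d + 1) = a + d + 1 from by omega]
    exact h3

lemma lexOf (hmono : ∀ a b c d : ℕ, P a b → P (a + c) (b + d))
    (hne : ∀ a : ℕ, ∃ b, P a b)
    (Hd : ∀ a a' : ℕ, a ≠ a' → 0 < ff P a → 0 < ff P a' → ff P a ≠ ff P a')
    (j : ℕ) : ∃ m : ℕ, ∀ a b : ℕ, a + b = j → (P a b ↔ b < m) := by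
  set s : Set ℕ := {b | ¬ P (j - b) b ∨ j < b} with hs
  have hsne : s.Nonempty := ⟨j + 1, Or.inr (by omega)⟩
  refine ⟨sInf s, fun a b hab => ?_⟩
  have ha : a = j - b := by omega
  have hbj : b ≤ j := by omega
  constructor
  · intro hP
    by_contra hnb
    push_neg at hnb
    have hmem := Nat.sInf_mem hsne
    rcases hmem with hc1 | hc2
    · have hP' : P a (sInf s + (b - sInf s)) := by
        rw [show sInf s + (b - sInf s) = b from by omega]; exact hP
      have := dcIter hmono hne Hd (b - sInf s) a (sInf s) hP'
      rw [show a + (b - sInf s) = j - sInf s from by omega] at this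
      exact hc1 this
    · omega
  · intro hbm
    have hnotmem : b ∉ s := Nat.notMem_of_lt_sInf hbm
    rw [hs] at hnotmem
    simp only [Set.mem_setOf_eq, not_or, not_not] at hnotmem
    rw [ha]
    exact hnotmem.1

lemma noLex (hmono : ∀ a b c d : ℕ, P a b → P (a + c) (b + d))
    (hne : ∀ a : ℕ, ∃ b, P a b)
    (hl : ∀ j : ℕ, ∃ m : ℕ, ∀ a b : ℕ, a + b = j → (P a b ↔ b < m))
    (a a' : ℕ) (hlt : a < a') (hpos : 0 < ff P a) (heq : ff P a = ff P a') : False := by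
  set v := ff P a with hv
  obtain ⟨m, hm⟩ := hl (a' + v - 1)
  have h1 : ¬ P a' (v - 1) := by
    rw [not_P_iff hmono hne, ← heq]
    omega
  have h2 : P a (a' + v - 1 - a) := by
    rw [P_iff hmono hne, ← hv]
    omega
  have e1 := hm a' (v - 1) (by omega)
  have e2 := hm a (a' + v - 1 - a) (by omega)
  rw [e1] at h1
  rw [e2] at h2
  omega

end LamLexAux

/-- For an `(x,y)`-primary monomial ideal `I` of `k[x,y]`, the positive parts of the
integer partition `(λ₁(I), λ₂(I), …)` are pairwise distinct if and only if `I` is a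
lex ideal. -/
theorem lam_distinct_iff_lex {k : Type*} [Field k]
    (I : Ideal (MvPolynomial (Fin 2) k)) (hmon : IsMonomialIdeal I) (hpr : IsXYPrimary I) :
    (∀ i i' : ℕ, 1 ≤ i → 1 ≤ i' → i ≠ i' → 0 < lam I i → 0 < lam I i' →
        lam I i ≠ lam I i') ↔ IsLexIdeal I := by

  classical
  set P : ℕ → ℕ → Prop := fun a b => (X 0 : MvPolynomial (Fin 2) k) ^ a * (X 1) ^ b ∈ I
    with hP
  have hmono : ∀ a b c d : ℕ, P a b → P (a + c) (b + d) := by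
    intro a b c d h
    have e : (X 0 : MvPolynomial (Fin 2) k) ^ (a + c) * (X 1) ^ (b + d)
        = (X 0 ^ c * X 1 ^ d) * (X 0 ^ a * X 1 ^ b) := by ring
    show (X 0 : MvPolynomial (Fin 2) k) ^ (a + c) * (X 1) ^ (b + d) ∈ I
    rw [e]
    exact Ideal.mul_mem_left _ _ h
  have hne : ∀ a : ℕ, ∃ b, P a b := by
    intro a
    obtain ⟨A, B, hA, hB⟩ := hpr
    exact ⟨B, Ideal.mul_mem_left _ _ hB⟩
  have key : ∀ a : ℕ, lam I (a + 1) = LamLexAux.ff P a := by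
    intro a
    unfold lam
    have hset : {j : ℕ | (X 0 : MvPolynomial (Fin 2) k) ^ ((a + 1) - 1) * (X 1) ^ j ∉ I}
        = ↑(Finset.range (LamLexAux.ff P a)) := by
      ext j
      simp only [Set.mem_setOf_eq, Finset.coe_range, Set.mem_Iio, Nat.add_sub_cancel]
      exact LamLexAux.not_P_iff hmono hne a j
    rw [hset, Set.ncard_coe_finset, Finset.card_range]
  constructor
  · intro H
    have Hd : ∀ a a' : ℕ, a ≠ a' → 0 < LamLexAux.ff P a → 0 < LamLexAux.ff P a' →
        LamLexAux.ff P a ≠ LamLexAux.ff P a' := by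
      intro a a' hne' h1 h2
      have := H (a + 1) (a' + 1) (by omega) (by omega) (by omega)
        (by rw [key a]; exact h1) (by rw [key a']; exact h2)
      rw [key a, key a'] at this
      exact this
    intro j
    obtain ⟨m, hm⟩ := LamLexAux.lexOf hmono hne Hd j
    exact ⟨m, fun a b hab => hm a b hab⟩
  · intro hlex i i' hi hi' hne' hp hp' heq
    have hl : ∀ j : ℕ, ∃ m : ℕ, ∀ a b : ℕ, a + b = j → (P a b ↔ b < m) := by
      intro j
      obtain ⟨m, hm⟩ := hlex j
      exact ⟨m, fun a b hab => hm a b hab⟩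
    have ki : lam I i = LamLexAux.ff P (i - 1) := by
      have := key (i - 1); rwa [show i - 1 + 1 = i from by omega] at this
    have ki' : lam I i' = LamLexAux.ff P (i' - 1) := by
      have := key (i' - 1); rwa [show i' - 1 + 1 = i' from by omega] at this
    rw [ki, ki'] at heq
    rw [ki] at hp
    rw [ki'] at hp'
    rcases lt_trichotomy (i - 1) (i' - 1) with h | h | h
    · exact LamLexAux.noLex hmono hne hl (i - 1) (i' - 1) h hp heq
    · omega
    · exact LamLexAux.noLex hmono hne hl (i' - 1) (i - 1) h hp' heq.symm
end

section
/- Fix n ≥ 1 and k ≥ 1 such that C(k+2, 2) ≥ n. Then ℓ_{k+1}(n+1) = ℓ_k(n); moreover the map sending (1, k, h_2, h_3, …) to (1, k+1, h_2, h_3, …) is a bijection from L_k(n) onto L_{k+1}(n+1). -/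
private lemma getD_set_ne' (l : List ℕ) (x t : ℕ) (h : t ≠ 1) :
    (l.set 1 x).getD t 0 = l.getD t 0 := by
  simp [List.getD_eq_getElem?_getD, List.getElem?_set_ne (Ne.symm h)]

private lemma getD_set_eq' (l : List ℕ) (x : ℕ) (h : 1 < l.length) :
    (l.set 1 x).getD 1 0 = x := by
  simp [List.getD_eq_getElem?_getD, List.getElem?_set_eq_of_lt _ h]

private lemma len_two' {l : List ℕ} {k : ℕ} (hk : 1 ≤ k) (h : l.getD 1 0 = k) :
    1 < l.length := by
  by_contra hl
  rw [List.getD_eq_default _ _ (by omega)] at h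
  omega

private lemma rep_one' (m : ℕ) (hm : 1 ≤ m) :
    IsMacaulayRep m 1 1 (fun _ => m) ∧
      macaulayBoundOf 1 1 (fun _ => m) = Nat.choose (m + 1) 2 := by
  refine ⟨⟨le_refl 1, le_refl 1, hm, by omega, by simp⟩, by simp [macaulayBoundOf]⟩

private lemma sum_ge' (l : List ℕ) : l.getD 0 0 + l.getD 1 0 + l.getD 2 0 ≤ l.sum := by
  match l with
  | [] => simp
  | [a] => simp
  | [a, b] => simp
  | a :: b :: c :: t => simp; omega

private lemma sum_set' (l : List ℕ) (x : ℕ) (h : 1 < l.length) :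
    (l.set 1 x).sum + l.getD 1 0 = l.sum + x := by
  match l, h with
  | a :: b :: t, _ => simp; omega

private lemma set_self' (l : List ℕ) (h : 1 < l.length) :
    l.set 1 (l.getD 1 0) = l := by
  match l, h with
  | a :: b :: t, _ => simp

private lemma hvec_set' {l : List ℕ} (hh : IsHVector l) (x : ℕ) (hx : 1 ≤ x)
    (hb : l.getD 2 0 ≤ Nat.choose (x + 1) 2) : IsHVector (l.set 1 x) := by
  obtain ⟨hne, hpos, h0, hmac⟩ := hh
  refine ⟨?_, ?_, ?_, ?_⟩
  · intro he
    have : l.length = 0 := by simpa using congrArg List.length he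
    exact hne (List.length_eq_zero_iff.mp this)
  · intro y hy
    rcases List.mem_or_eq_of_mem_set hy with hmem | rfl
    · exact hpos y hmem
    · exact hx
  · rw [getD_set_ne' l x 0 (by norm_num)]; exact h0
  · intro t ht htlen
    rw [List.length_set] at htlen
    rcases eq_or_lt_of_le ht with h1 | h2
    · subst h1
      refine ⟨1, fun _ => x, ?_, ?_⟩
      · rw [getD_set_eq' l x (by omega)]
        exact (rep_one' x hx).1
      · rw [(rep_one' x hx).2, getD_set_ne' l x 2 (by norm_num)]
        exact hb
    · rw [getD_set_ne' l x t (by omega), getD_set_ne' l x (t + 1) (by omega)]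
      exact hmac t ht htlen

/-- If `n ≥ 1`, `k ≥ 1` and `C(k+2, 2) ≥ n`, then `ℓ_{k+1}(n+1) = ℓ_k(n)`; moreover
the map `(1, k, h₂, h₃, …) ↦ (1, k+1, h₂, h₃, …)` is a bijection from `L_k(n)`
onto `L_{k+1}(n+1)`. -/
theorem card_Lk_succ (n k : ℕ) (hn : 1 ≤ n) (hk : 1 ≤ k)
    (hbin : n ≤ Nat.choose (k + 2) 2) :
    (LkSet (k + 1) (n + 1)).ncard = (LkSet k n).ncard ∧
    Set.BijOn (fun h : List ℕ => h.set 1 (k + 1)) (LkSet k n) (LkSet (k + 1) (n + 1)) := by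
  have hch : Nat.choose (k + 2) 2 = Nat.choose (k + 1) 2 + (k + 1) := by
    rw [show (2 : ℕ) = 1 + 1 from rfl, Nat.choose_succ_succ (k + 1) 1, Nat.choose_one_right]
    norm_num [Nat.succ_eq_add_one]
    omega
  have hmaps : ∀ h ∈ LkSet k n, h.set 1 (k + 1) ∈ LkSet (k + 1) (n + 1) := by
    rintro h ⟨⟨hh, hsum⟩, h1⟩
    have hlen : 1 < h.length := len_two' hk h1
    have hge := sum_ge' h
    rw [hh.2.2.1, h1, hsum] at hge
    have hgd2 : h.getD 2 0 ≤ Nat.choose (k + 2) 2 := by omega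
    refine ⟨⟨hvec_set' hh (k + 1) (by omega) hgd2, ?_⟩,
      getD_set_eq' h (k + 1) hlen⟩
    have := sum_set' h (k + 1) hlen
    rw [h1, hsum] at this
    omega
  have hbij : Set.BijOn (fun h : List ℕ => h.set 1 (k + 1)) (LkSet k n)
      (LkSet (k + 1) (n + 1)) := by
    refine ⟨hmaps, ?_, ?_⟩
    · rintro h ⟨_, h1⟩ h' ⟨_, h1'⟩ heq
      have hlen : 1 < h.length := len_two' hk h1
      have hlen' : 1 < h'.length := len_two' hk h1'
      have e : h.set 1 k = h'.set 1 k := by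
        have := congrArg (fun l : List ℕ => l.set 1 k) heq
        simpa only [List.set_set] using this
      have eh : h.set 1 k = h := by
        conv_rhs => rw [← set_self' h hlen]
        rw [h1]
      have eh' : h'.set 1 k = h' := by
        conv_rhs => rw [← set_self' h' hlen']
        rw [h1']
      rw [← eh, ← eh', e]
    · rintro g ⟨⟨hg, hgsum⟩, g1⟩
      have hglen : 1 < g.length := len_two' (by omega) g1
      have hge := sum_ge' g
      rw [hg.2.2.1, g1, hgsum] at hge
      have hgd2 : g.getD 2 0 ≤ Nat.choose (k + 1) 2 := by omega
      refine ⟨g.set 1 k, ⟨⟨hvec_set' hg k hk hgd2, ?_⟩, getD_set_eq' g k hglen⟩, ?_⟩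
      · have := sum_set' g k hglen
        rw [g1, hgsum] at this
        omega
      · show (g.set 1 k).set 1 (k + 1) = g
        rw [List.set_set]
        conv_rhs => rw [← set_self' g hglen]
        rw [g1]
  exact ⟨by rw [← hbij.image_eq]; exact Set.ncard_image_of_injOn hbij.injOn, hbij⟩
end

section
/- For all n ≥ 1 and k ≥ 1, ℓ_k(n) ≤ ℓ_{k+1}(n+1). -/
lemma my_length_le_sum (l : List ℕ) (h : ∀ x ∈ l, 0 < x) : l.length ≤ l.sum := by
  induction l with
  | nil => simp
  | cons a t ih =>
    simp only [List.length_cons, List.sum_cons]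
    have ha := h a (by simp)
    have := ih (fun x hx => h x (by simp [hx]))
    omega

lemma my_finite_sum (m : ℕ) : {l : List ℕ | (∀ x ∈ l, 0 < x) ∧ l.sum = m}.Finite := by
  have h1 : {l : List (Fin (m + 1)) | l.length ≤ m}.Finite := List.finite_length_le _ m
  apply (h1.image (List.map Fin.val)).subset
  rintro l ⟨hpos, hsum⟩
  have hlen : l.length ≤ m := hsum ▸ my_length_le_sum l hpos
  have hmem : ∀ x ∈ l, x < m + 1 := by
    intro x hx
    have := List.single_le_sum (fun y (_ : y ∈ l) => Nat.zero_le y) x hx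
    omega
  refine ⟨l.pmap (fun x hx => (⟨x, hx⟩ : Fin (m+1))) hmem, ?_, ?_⟩
  · simp [hlen]
  · simp [List.map_pmap]

lemma my_shape (k n : ℕ) (hk : 1 ≤ k) (h : List ℕ) (hh : h ∈ LkSet k n) :
    ∃ rest, h = 1 :: k :: rest := by
  obtain ⟨⟨⟨hne, hpos, h0, hmac⟩, hsum⟩, h1⟩ := hh
  match h with
  | [] => exact absurd rfl hne
  | [x] => simp at h1; omega
  | x :: y :: rest =>
    simp only [List.getD_cons_zero] at h0
    simp only [List.getD_cons_succ, List.getD_cons_zero] at h1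
    exact ⟨rest, by rw [h0, h1]⟩

lemma my_rep_one (a : ℕ) (ha : 1 ≤ a) : IsMacaulayRep a 1 1 (fun _ => a) := by
  refine ⟨le_refl _, le_refl _, ha, fun i h1 h2 => by omega, ?_⟩
  simp [Finset.Icc_self]

lemma my_bound_one (b : ℕ → ℕ) : macaulayBoundOf 1 1 b = Nat.choose (b 1 + 1) 2 := by
  simp [macaulayBoundOf, Finset.Icc_self]

/-- For all `n ≥ 1` and `k ≥ 1`, `ℓ_k(n) ≤ ℓ_{k+1}(n+1)`. -/
theorem card_Lk_mono :
    ∀ n k : ℕ, 1 ≤ n → 1 ≤ k → (LkSet k n).ncard ≤ (LkSet (k + 1) (n + 1)).ncard := by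
  intro n k hn hk
  have hfin : (LkSet (k + 1) (n + 1)).Finite := by
    apply (my_finite_sum (n + 1)).subset
    rintro l ⟨⟨⟨_, hpos, _, _⟩, hsum⟩, _⟩
    exact ⟨hpos, hsum⟩
  apply Set.ncard_le_ncard_of_injOn (fun l => l.set 1 (k + 1)) _ _ hfin
  · -- maps into target
    intro h hh
    obtain ⟨rest, rfl⟩ := my_shape k n hk h hh
    obtain ⟨⟨⟨hne, hpos, h0, hmac⟩, hsum⟩, h1⟩ := hh
    show (1 :: (k + 1) :: rest) ∈ LkSet (k + 1) (n + 1)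
    refine ⟨⟨⟨by simp, ?_, by simp, ?_⟩, ?_⟩, by simp⟩
    · intro x hx
      simp only [List.mem_cons] at hx
      rcases hx with rfl | rfl | hx
      · exact one_pos
      · omega
      · exact hpos x (by simp [hx])
    · intro t ht hlen
      simp only [List.length_cons] at hlen
      match t, ht with
      | 1, _ =>
        refine ⟨1, fun _ => k + 1, my_rep_one (k + 1) (by omega), ?_⟩
        rw [my_bound_one]
        -- need (1::(k+1)::rest).getD 2 0 = rest.getD 0 0 ≤ C(k+2, 2)
        obtain ⟨j, b, ⟨hj1, hj2, _, _, hsumrep⟩, hb⟩ :=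
          hmac 1 le_rfl (by simp; omega)
        have hj : j = 1 := by omega
        subst hj
        simp only [List.getD_cons_succ, List.getD_cons_zero] at hsumrep hb ⊢
        rw [Finset.Icc_self, Finset.sum_singleton, Nat.choose_one_right] at hsumrep
        rw [my_bound_one] at hb
        calc rest.getD 0 0 ≤ Nat.choose (b 1 + 1) 2 := hb
          _ ≤ Nat.choose (k + 1 + 1) 2 := Nat.choose_le_choose 2 (by omega)
      | (t' + 2), _ =>
        have hold := hmac (t' + 2) (by omega) (by simp; omega)
        simpa only [List.getD_cons_succ] using hold
    · simp only [List.sum_cons]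
      simp only [List.sum_cons] at hsum
      omega
  · -- injective
    intro h hh h' hh' heq
    obtain ⟨r, rfl⟩ := my_shape k n hk h hh
    obtain ⟨r', rfl⟩ := my_shape k n hk h' hh'
    simpa using heq
end
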